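/- arXiv:0911.3603 — 3 statements merged into one kernel-verified Lean document; each statement's English description precedes it below -/
import Mathlib

section
/- In the group algebra kQ_{4t} over a field of characteristic 2, the norm element N = Σ_{j ∈ Q_{4t}} j satisfies N = a^{2t-1} b, where a = g+1 and b = h+1. -/
open MonoidAlgebra QuaternionGroup

private lemma geom_char2 {R : Type*} [Ring R] [CharP R 2] (x : R) (n : ℕ) :
    (x + 1) ^ (2 ^ n - 1) = ∑ i ∈ Finset.range (2 ^ n), x ^ i := by
  haveI : Fact (Nat.Prime 2) := ⟨Nat.prime_two⟩
  induction n with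
  | zero => simp
  | succ n ih =>
    have h1 : (x + 1) ^ (2 ^ n) = x ^ (2 ^ n) + 1 := by
      simpa using add_pow_char_pow_of_commute 2 n (Commute.one_right x)
    have h2 : 2 ^ (n + 1) - 1 = 2 ^ n + (2 ^ n - 1) := by
      have : 1 ≤ 2 ^ n := Nat.one_le_two_pow
      have : 2 ^ (n + 1) = 2 ^ n + 2 ^ n := by ring
      omega
    have h3 : 2 ^ (n + 1) = 2 ^ n + 2 ^ n := by ring
    rw [h2, pow_add, h1, ih, h3, Finset.sum_range_add]
    rw [add_mul, one_mul, Finset.mul_sum]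
    simp_rw [← pow_add]
    exact add_comm _ _

private def qEquiv (n : ℕ) : ZMod (2 * n) ⊕ ZMod (2 * n) ≃ QuaternionGroup n where
  toFun i :=
    match i with
    | Sum.inl j => QuaternionGroup.a j
    | Sum.inr j => QuaternionGroup.xa j
  invFun i :=
    match i with
    | QuaternionGroup.a j => Sum.inl j
    | QuaternionGroup.xa j => Sum.inr j
  left_inv := by rintro (x | x) <;> rfl
  right_inv := by rintro (x | x) <;> rfl

private lemma zmod_sum_range {n : ℕ} [NeZero n] {M : Type*} [AddCommMonoid M]
    (F : ZMod n → M) : ∑ i ∈ Finset.range n, F (i : ZMod n) = ∑ j : ZMod n, F j := by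
  exact Finset.sum_bij' (fun i _ => ((i : ZMod n))) (fun j _ => j.val)
    (fun _ _ => Finset.mem_univ _) (fun j _ => Finset.mem_range.mpr (ZMod.val_lt j))
    (fun i hi => ZMod.val_cast_of_lt (Finset.mem_range.mp hi))
    (fun j _ => by simp [ZMod.natCast_val, ZMod.cast_id])
    (fun _ _ => rfl)

/-- the norm element `N = Σ_{j ∈ Q_{4t}} j` equals `a^{2t-1} b`. -/
theorem stmt_3 (k : Type*) [Field k] [CharP k 2] (t : ℕ) (ht : 2 ≤ t)
    (hpow : ∃ m : ℕ, t = 2 ^ m) [NeZero t]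
    (g h : MonoidAlgebra k (QuaternionGroup t))
    (hg : g = of k (QuaternionGroup t) (QuaternionGroup.a 1))
    (hh : h = of k (QuaternionGroup t) (QuaternionGroup.xa 0))
    (a b N : MonoidAlgebra k (QuaternionGroup t))
    (ha : a = g + 1) (hb : b = h + 1)
    (hN : N = ∑ j : QuaternionGroup t, of k (QuaternionGroup t) j) :
    N = a ^ (2 * t - 1) * b := by
  obtain ⟨m, rfl⟩ := hpow
  subst hg hh ha hb hN
  set F := of k (QuaternionGroup (2 ^ m)) with hF
  haveI hchar : CharP (MonoidAlgebra k (QuaternionGroup (2 ^ m))) 2 :=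
    charP_of_injective_ringHom
      (algebraMap k (MonoidAlgebra k (QuaternionGroup (2 ^ m)))).injective 2
  have h2t : 2 * 2 ^ m = 2 ^ (m + 1) := by ring
  -- step 1: a^(2t-1) = ∑ i : ZMod (2t), F (a i)
  have hS : (F (QuaternionGroup.a 1) + 1) ^ (2 * 2 ^ m - 1)
      = ∑ i : ZMod (2 * 2 ^ m), F (QuaternionGroup.a i) := by
    have he : (F (QuaternionGroup.a 1) + 1) ^ (2 * 2 ^ m - 1)
        = (F (QuaternionGroup.a 1) + 1) ^ (2 ^ (m + 1) - 1) := by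
      rw [show 2 * 2 ^ m - 1 = 2 ^ (m + 1) - 1 by omega]
    rw [he, geom_char2]
    have : ∀ i : ℕ, F (QuaternionGroup.a 1) ^ i
        = F (QuaternionGroup.a (i : ZMod (2 * 2 ^ m))) := by
      intro i
      rw [← map_pow, QuaternionGroup.a_one_pow]
    simp_rw [this]
    rw [← h2t]
    exact zmod_sum_range (fun j => F (QuaternionGroup.a j))
  rw [hS]
  -- step 2: decompose N
  rw [← Equiv.sum_comp (qEquiv (2 ^ m)) (fun j => F j), Fintype.sum_sum_type]
  have hq1 : ∀ j : ZMod (2 * 2 ^ m), (qEquiv (2 ^ m)) (Sum.inl j) = QuaternionGroup.a j :=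
    fun _ => rfl
  have hq2 : ∀ j : ZMod (2 * 2 ^ m), (qEquiv (2 ^ m)) (Sum.inr j) = QuaternionGroup.xa j :=
    fun _ => rfl
  simp_rw [hq1, hq2]
  -- step 3: expand the product
  rw [mul_add, mul_one, Finset.sum_mul]
  have hmul : ∀ i : ZMod (2 * 2 ^ m),
      F (QuaternionGroup.a i) * F (QuaternionGroup.xa 0) = F (QuaternionGroup.xa (-i)) := by
    intro i
    rw [← map_mul, QuaternionGroup.a_mul_xa, zero_sub]
  simp_rw [hmul]
  rw [← Equiv.sum_comp (Equiv.neg (ZMod (2 * 2 ^ m)))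
    (fun i => F (QuaternionGroup.xa (-i)))]
  simp only [Equiv.neg_apply, neg_neg]
  exact add_comm _ _
end

section
/- Let Λ = k[x, y, s, s^{-1}]/(x^2 + y^2 + xy, y^3) with char k = 2 (Tate cohomology of Q_8). In Λ, xy·(x+y) = x²y + xy² and summing the five Hochschild coboundary equations for the triples (y,x,y), (x,y,y), (y,y,x), (x,x,x), (x,y,x) with values 0, 0, 0, 0, xy yields xy = x·(g(x,y) + g(y,x)) for any 2-cochain g. -/
open MvPolynomial

set_option maxHeartbeats 2000000

/-- `k[x,y][s,s⁻¹]`: Laurent polynomials in `s` over `k[x,y]`. -/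
noncomputable abbrev LaurentXY (k : Type) [Field k] : Type :=
  LaurentPolynomial (MvPolynomial (Fin 2) k)

/-- The Tate cohomology ring of `Q_8`:
`Λ = k[x,y,s,s⁻¹]/(x² + y² + xy, y³)`. -/
noncomputable abbrev LamQ8 (k : Type) [Field k] : Type :=
  LaurentXY k ⧸ (Ideal.span
    {LaurentPolynomial.C (X 0 ^ 2 + X 1 ^ 2 + X 0 * X 1),
     LaurentPolynomial.C ((X 1 : MvPolynomial (Fin 2) k) ^ 3)} : Ideal (LaurentXY k))

/-- The class of `x` in `Λ`. -/
noncomputable def qx (k : Type) [Field k] : LamQ8 k :=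
  Ideal.Quotient.mk _ (LaurentPolynomial.C (X 0))
/-- The class of `y` in `Λ`. -/
noncomputable def qy (k : Type) [Field k] : LamQ8 k :=
  Ideal.Quotient.mk _ (LaurentPolynomial.C (X 1))
/-- The class of `s` in `Λ`. -/
noncomputable def qs (k : Type) [Field k] : LamQ8 k :=
  Ideal.Quotient.mk _ (LaurentPolynomial.T 1)
/-- The class of `s⁻¹` in `Λ`. -/
noncomputable def qsInv (k : Type) [Field k] : LamQ8 k :=
  Ideal.Quotient.mk _ (LaurentPolynomial.T (-1))

/-- in `Λ`, `xy(x+y) = x²y + xy²`, and for any `2`-cochain `g`,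
summing the five Hochschild coboundary equations for the triples
`(y,x,y), (x,y,y), (y,y,x), (x,x,x), (x,y,x)` with values `0,0,0,0,xy`
yields `xy = x(g(x,y) + g(y,x))`. -/
theorem stmt_11 (k : Type) [Field k] [CharP k 2] :
    (qx k * qy k * (qx k + qy k) = qx k ^ 2 * qy k + qx k * qy k ^ 2) ∧
    ∀ g : LamQ8 k →ₗ[k] LamQ8 k →ₗ[k] LamQ8 k,
      (qy k * g (qx k) (qy k) + g (qy k * qx k) (qy k) + g (qy k) (qx k * qy k)
        + g (qy k) (qx k) * qy k = 0) →
      (qx k * g (qy k) (qy k) + g (qx k * qy k) (qy k) + g (qx k) (qy k ^ 2)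
        + g (qx k) (qy k) * qy k = 0) →
      (qy k * g (qy k) (qx k) + g (qy k ^ 2) (qx k) + g (qy k) (qy k * qx k)
        + g (qy k) (qy k) * qx k = 0) →
      (qx k * g (qx k) (qx k) + g (qx k ^ 2) (qx k) + g (qx k) (qx k ^ 2)
        + g (qx k) (qx k) * qx k = 0) →
      (qx k * g (qy k) (qx k) + g (qx k * qy k) (qx k) + g (qx k) (qy k * qx k)
        + g (qx k) (qy k) * qx k = qx k * qy k) →
      qx k * qy k = qx k * (g (qx k) (qy k) + g (qy k) (qx k)) := by
  constructor
  · ring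
  intro g h1 h2 h3 h4 h5
  have htwo : (2 : LamQ8 k) = 0 := by
    have h2k : (2 : k) = 0 := by exact_mod_cast CharP.cast_eq_zero k 2
    rw [show (2 : LamQ8 k) = algebraMap k (LamQ8 k) 2 from (map_ofNat (algebraMap k (LamQ8 k)) 2).symm, h2k,
      map_zero]
  have hrel : qx k ^ 2 + qy k ^ 2 + qx k * qy k = 0 := by
    simp only [qx, qy, ← map_pow, ← map_mul, ← map_add]
    exact Ideal.Quotient.eq_zero_iff_mem.mpr (Ideal.subset_span (Set.mem_insert _ _))
  have hx2 : qx k ^ 2 = qy k ^ 2 + qx k * qy k := by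
    linear_combination hrel - (qy k ^ 2 + qx k * qy k) * htwo
  have e4a : g (qx k ^ 2) (qx k) = g (qy k ^ 2) (qx k) + g (qx k * qy k) (qx k) := by
    rw [hx2, g.map_add, LinearMap.add_apply]
  have e4b : g (qx k) (qx k ^ 2) = g (qx k) (qy k ^ 2) + g (qx k) (qx k * qy k) := by
    rw [hx2, (g (qx k)).map_add]
  rw [show qy k * qx k = qx k * qy k by ring] at h1 h3 h5
  rw [e4a, e4b] at h4
  linear_combination (qy k * g (qx k) (qy k) + qy k * g (qy k) (qx k)
      + qx k * g (qy k) (qy k) + qx k * g (qx k) (qx k)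
      + g (qx k * qy k) (qy k) + g (qy k) (qx k * qy k)
      + g (qx k) (qy k ^ 2) + g (qy k ^ 2) (qx k)
      + g (qx k * qy k) (qx k) + g (qx k) (qx k * qy k)) * htwo
    - (h1 + h2 + h3 + h4 + h5)
end

section
/- Let Λ = k[x, y, s, s^{-1}]/(x² + y² + xy, y³), char k = 2, A = [[y, x+y],[x, y]], B = [[x², 0],[x², x²]], and D = [[x, y],[x+y, x]] matrices over Λ. Then AD = DA = 0, and there do not exist 2×2 matrices Q, R over Λ with B = AQ + RA. -/
open MvPolynomial

/-- Witness ring: `k[x,y]/(x²+xy+y², x³)`, as `Fin 6 → k` with basis `1,x,y,x²,xy,x²y`. -/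
def SW (k : Type) [Field k] : Type := Fin 6 → k

namespace SW
variable {k : Type} [Field k]

instance : AddCommGroup (SW k) := inferInstanceAs (AddCommGroup (Fin 6 → k))

lemma add_apply (a b : SW k) (i : Fin 6) : (a + b) i = a i + b i := rfl
lemma zero_apply (i : Fin 6) : (0 : SW k) i = 0 := rfl
lemma neg_apply (a : SW k) (i : Fin 6) : (-a) i = -(a i) := rfl
lemma sub_apply (a b : SW k) (i : Fin 6) : (a - b) i = a i - b i := rfl

def mulS (a b : SW k) : SW k := fun i =>
  if i = 0 then a 0 * b 0
  else if i = 1 then a 0 * b 1 + a 1 * b 0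
  else if i = 2 then a 0 * b 2 + a 2 * b 0
  else if i = 3 then a 0 * b 3 + a 3 * b 0 + a 1 * b 1 - a 2 * b 2
  else if i = 4 then a 0 * b 4 + a 4 * b 0 + a 1 * b 2 + a 2 * b 1 - a 2 * b 2
  else a 0 * b 5 + a 5 * b 0 + a 1 * b 4 + a 4 * b 1 + a 2 * b 3 + a 3 * b 2
        - a 2 * b 4 - a 4 * b 2

def oneS : SW k := fun i => if i = 0 then 1 else 0

instance : CommRing (SW k) :=
  { (inferInstance : AddCommGroup (SW k)) with
    mul := mulS
    one := oneS
    mul_assoc := by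
      intro a b c; show mulS (mulS a b) c = mulS a (mulS b c)
      funext i; fin_cases i <;> simp [mulS] <;> ring
    mul_comm := by
      intro a b; show mulS a b = mulS b a
      funext i; fin_cases i <;> simp [mulS] <;> ring
    one_mul := by
      intro a; show mulS oneS a = a
      funext i; fin_cases i <;> simp [mulS, oneS]
    mul_one := by
      intro a; show mulS a oneS = a
      funext i; fin_cases i <;> simp [mulS, oneS]
    left_distrib := by
      intro a b c; show mulS a (b + c) = mulS a b + mulS a c
      funext i; fin_cases i <;> simp [mulS, add_apply] <;> ring
    right_distrib := by
      intro a b c; show mulS (a + b) c = mulS a c + mulS b c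
      funext i; fin_cases i <;> simp [mulS, add_apply] <;> ring
    zero_mul := by
      intro a; show mulS 0 a = 0
      funext i; fin_cases i <;> simp [mulS, zero_apply]
    mul_zero := by
      intro a; show mulS a 0 = 0
      funext i; fin_cases i <;> simp [mulS, zero_apply] }

end SW

namespace SW
variable {k : Type} [Field k]

/-- basis vectors -/
def e (j : Fin 6) : SW k := fun i => if i = j then 1 else 0

lemma mul_apply (a b : SW k) : a * b = mulS a b := rfl

/-- inclusion of constants -/
def CS : k →+* SW k where
  toFun c := fun i => if i = 0 then c else 0
  map_one' := rfl
  map_mul' a b := by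
    show (fun i : Fin 6 => if i = 0 then a * b else 0) =
      mulS (fun i => if i = 0 then a else 0) (fun i => if i = 0 then b else 0)
    funext i; fin_cases i <;> simp [mul_apply, mulS]
  map_zero' := by funext i; fin_cases i <;> simp [zero_apply]
  map_add' a b := by
    show (fun i : Fin 6 => if i = 0 then a + b else 0) =
      fun i => (if i = 0 then a else 0) + (if i = 0 then b else 0)
    funext i; fin_cases i <;> simp [add_apply]

/-- evaluation `k[x,y] → SW k`, `x ↦ e 1`, `y ↦ e 2`. -/
noncomputable def φ : MvPolynomial (Fin 2) k →+* SW k :=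
  MvPolynomial.eval₂Hom CS (fun i => if i = 0 then e 1 else e 2)

lemma φ_X0 : φ (MvPolynomial.X 0 : MvPolynomial (Fin 2) k) = e 1 := by
  simp [φ]
lemma φ_X1 : φ (MvPolynomial.X 1 : MvPolynomial (Fin 2) k) = e 2 := by
  simp [φ]

lemma e1_mul_e1 : (e 1 * e 1 : SW k) = e 3 := by
  funext i; fin_cases i <;> simp [mul_apply, mulS, e]
lemma e1_mul_e2 : (e 1 * e 2 : SW k) = e 4 := by
  funext i; fin_cases i <;> simp [mul_apply, mulS, e]
lemma e2_mul_e2 : (e 2 * e 2 : SW k) = -(e 3) - e 4 := by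
  funext i; fin_cases i <;>
    simp [mul_apply, mulS, e, sub_apply, neg_apply]
lemma e2_mul_e3 : (e 2 * e 3 : SW k) = e 5 := by
  funext i; fin_cases i <;> simp [mul_apply, mulS, e]
lemma e2_mul_e4 : (e 2 * e 4 : SW k) = -(e 5) := by
  funext i; fin_cases i <;> simp [mul_apply, mulS, e, neg_apply]

lemma φ_f : φ (MvPolynomial.X 0 ^ 2 + MvPolynomial.X 1 ^ 2 +
    MvPolynomial.X 0 * MvPolynomial.X 1 : MvPolynomial (Fin 2) k) = 0 := by
  simp only [map_add, map_mul, map_pow, φ_X0, φ_X1, pow_two]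
  rw [e1_mul_e1, e2_mul_e2, e1_mul_e2]; ring

lemma φ_g : φ ((MvPolynomial.X 1 : MvPolynomial (Fin 2) k) ^ 3) = 0 := by
  rw [map_pow, φ_X1, pow_succ, pow_two]
  rw [e2_mul_e2, sub_mul, neg_mul, mul_comm (e 3) (e 2), mul_comm (e 4) (e 2),
    e2_mul_e3, e2_mul_e4]; ring

lemma φ_x2y : φ (MvPolynomial.X 0 ^ 2 * MvPolynomial.X 1 : MvPolynomial (Fin 2) k)
    = e 5 := by
  simp only [map_mul, map_pow, φ_X0, φ_X1, pow_two]
  rw [e1_mul_e1, mul_comm (e 3) (e 2), e2_mul_e3]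

lemma e5_ne_zero : (e 5 : SW k) ≠ 0 := by
  intro h
  have := congrFun h 5
  simp [e, zero_apply] at this

end SW


lemma x2y_ne_zero (k : Type) [Field k] : qx k ^ 2 * qy k ≠ 0 := by
  intro h
  letI : Algebra (MvPolynomial (Fin 2) k) (SW k) := SW.φ.toAlgebra
  let ψ : LaurentXY k →+* SW k :=
    ((AddMonoidAlgebra.lift (MvPolynomial (Fin 2) k) (SW k) ℤ) 1).toRingHom
  have hC : ∀ p : MvPolynomial (Fin 2) k,
      ψ (LaurentPolynomial.C p) = SW.φ p := by
    intro p
    rw [LaurentPolynomial.C_eq_algebraMap]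
    exact ((AddMonoidAlgebra.lift (MvPolynomial (Fin 2) k) (SW k) ℤ) 1).commutes p
  have h0 : ∀ a ∈ (Ideal.span
      {LaurentPolynomial.C (X 0 ^ 2 + X 1 ^ 2 + X 0 * X 1),
       LaurentPolynomial.C ((X 1 : MvPolynomial (Fin 2) k) ^ 3)}
        : Ideal (LaurentXY k)), ψ a = 0 := by
    intro a ha
    have hsub : ({LaurentPolynomial.C (X 0 ^ 2 + X 1 ^ 2 + X 0 * X 1),
        LaurentPolynomial.C ((X 1 : MvPolynomial (Fin 2) k) ^ 3)}
          : Set (LaurentXY k)) ⊆ ↑(RingHom.ker ψ) := by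
      rintro t ht
      simp only [Set.mem_insert_iff, Set.mem_singleton_iff] at ht
      rcases ht with rfl | rfl
      · simp only [SetLike.mem_coe, RingHom.mem_ker, hC, SW.φ_f]
      · simp only [SetLike.mem_coe, RingHom.mem_ker, hC, SW.φ_g]
    exact (Ideal.span_le.mpr hsub) ha
  let Ψ : LamQ8 k →+* SW k := Ideal.Quotient.lift _ ψ h0
  have hx : Ψ (qx k) = SW.e 1 := by
    rw [qx]
    rw [Ideal.Quotient.lift_mk, hC, SW.φ_X0]
  have hy : Ψ (qy k) = SW.e 2 := by
    rw [qy]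
    rw [Ideal.Quotient.lift_mk, hC, SW.φ_X1]
  have hfin := congrArg Ψ h
  rw [map_mul, map_pow, hx, hy, map_zero, pow_two, SW.e1_mul_e1,
    mul_comm, SW.e2_mul_e3] at hfin
  exact SW.e5_ne_zero hfin

set_option maxHeartbeats 1000000 in
/-- with `A = [[y, x+y],[x, y]]`, `B = [[x², 0],[x², x²]]`,
`D = [[x, y],[x+y, x]]` over `Λ`, one has `AD = DA = 0` and there are no
`2×2` matrices `Q, R` over `Λ` with `B = AQ + RA`. -/
theorem stmt_16 (k : Type) [Field k] [CharP k 2]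
    (A B D : Matrix (Fin 2) (Fin 2) (LamQ8 k))
    (hA : A = !![qy k, qx k + qy k; qx k, qy k])
    (hB : B = !![qx k ^ 2, 0; qx k ^ 2, qx k ^ 2])
    (hD : D = !![qx k, qy k; qx k + qy k, qx k]) :
    A * D = 0 ∧ D * A = 0 ∧
      ¬ ∃ Q R : Matrix (Fin 2) (Fin 2) (LamQ8 k), B = A * Q + R * A := by
  have htwo : (2 : LamQ8 k) = 0 := by
    rw [← map_ofNat (algebraMap k (LamQ8 k)) 2,
      show (2 : k) = 0 by exact_mod_cast CharP.cast_eq_zero k 2, map_zero]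
  have hrel : qx k ^ 2 + qy k ^ 2 + qx k * qy k = 0 := by
    rw [qx, qy, ← map_pow, ← map_pow, ← map_mul, ← map_pow, ← map_pow,
      ← map_mul, ← map_add, ← map_add, ← map_add, ← map_add]
    exact Ideal.Quotient.eq_zero_iff_mem.mpr
      (Ideal.subset_span (Set.mem_insert _ _))
  have hAD : A * D = 0 := by
    rw [hA, hD, Matrix.mul_fin_two,
      show qy k * qx k + (qx k + qy k) * (qx k + qy k) = 0 from by
        linear_combination hrel + (qx k * qy k) * htwo,
      show qy k * qy k + (qx k + qy k) * qx k = 0 from by linear_combination hrel,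
      show qx k * qx k + qy k * (qx k + qy k) = 0 from by linear_combination hrel,
      show qx k * qy k + qy k * qx k = 0 from by
        linear_combination (qx k * qy k) * htwo]
    ext i j
    fin_cases i <;> fin_cases j <;> rfl
  have hDA : D * A = 0 := by
    rw [hA, hD, Matrix.mul_fin_two,
      show qx k * qy k + qy k * qx k = 0 from by
        linear_combination (qx k * qy k) * htwo,
      show qx k * (qx k + qy k) + qy k * qy k = 0 from by linear_combination hrel,
      show (qx k + qy k) * qy k + qx k * qx k = 0 from by linear_combination hrel,
      show (qx k + qy k) * (qx k + qy k) + qx k * qy k = 0 from by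
        linear_combination hrel + (qx k * qy k) * htwo]
    ext i j
    fin_cases i <;> fin_cases j <;> rfl
  refine ⟨hAD, hDA, ?_⟩
  rintro ⟨Q, R, h⟩
  have t1 : Matrix.trace (B * D) = 0 := by
    rw [h, Matrix.add_mul, Matrix.trace_add, Matrix.mul_assoc A Q D,
      Matrix.trace_mul_comm A (Q * D), Matrix.mul_assoc Q D A,
      Matrix.mul_assoc R A D]
    have z1 : Q * (0 : Matrix (Fin 2) (Fin 2) (LamQ8 k)) = 0 := Matrix.mul_zero Q
    have z2 : R * (0 : Matrix (Fin 2) (Fin 2) (LamQ8 k)) = 0 := Matrix.mul_zero R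
    rw [hDA, hAD, z1, z2, Matrix.trace_zero, add_zero]
  have t2 : Matrix.trace (B * D) = qx k ^ 2 * qy k + 2 * qx k ^ 3 := by
    rw [hB, hD, Matrix.mul_fin_two, Matrix.trace_fin_two_of]
    ring
  exact x2y_ne_zero k (by linear_combination t1 - t2 - qx k ^ 3 * htwo)
end
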